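/- For every positive integer n, the alternating sum over all connected (simple, labelled) graphs G on vertex set {1,...,n} of (-1)^{e(G)}, where e(G) is the number of edges of G, equals (-1)^{n-1} (n-1)!. -/

import Mathlib

open scoped Classical

/-- The number of edges of a simple graph on a finite vertex type. -/
noncomputable def edgeCount {V : Type*} [Fintype V] (G : SimpleGraph V) : ℕ :=
  G.edgeSet.toFinite.toFinset.card

set_option linter.unusedSectionVars false
set_option linter.unusedVariables false

namespace AltSum

open SimpleGraph Finset

variable {V : Type*} [Fintype V]

lemma edgeCount_eq_ncard (G : SimpleGraph V) : edgeCount G = G.edgeSet.ncard := by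
  rw [edgeCount, Set.ncard_eq_toFinset_card', Set.toFinite_toFinset]

lemma edgeCount_bot : edgeCount (⊥ : SimpleGraph V) = 0 := by
  simp [edgeCount_eq_ncard]

lemma edgeSet_map {W : Type*} (f : V ↪ W) (G : SimpleGraph V) :
    (G.map f).edgeSet = Sym2.map f '' G.edgeSet := by
  ext e
  refine Sym2.ind (fun x y => ?_) e
  simp only [mem_edgeSet, map_adj, Set.mem_image]
  constructor
  · rintro ⟨a, b, hab, rfl, rfl⟩
    exact ⟨s(a, b), hab, rfl⟩
  · rintro ⟨e', he', he⟩
    induction e' using Sym2.ind with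
    | _ a b =>
      rw [Sym2.map_pair_eq, Sym2.eq_iff] at he
      rcases he with ⟨rfl, rfl⟩ | ⟨rfl, rfl⟩
      · exact ⟨a, b, he', rfl, rfl⟩
      · exact ⟨b, a, he'.symm, rfl, rfl⟩

lemma edgeCount_map {W : Type*} [Fintype W] (f : V ↪ W) (G : SimpleGraph V) :
    edgeCount (G.map f) = edgeCount G := by
  rw [edgeCount_eq_ncard, edgeCount_eq_ncard, edgeSet_map,
    Set.ncard_image_of_injective _ (Sym2.map.injective f.injective)]



open SimpleGraph Finset

variable {V : Type*} [Fintype V] {a b u : V} {G : SimpleGraph V}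

noncomputable def tog (a b : V) (G : SimpleGraph V) : SimpleGraph V := symmDiff G (edge a b)

lemma edge_le_of_adj (h : G.Adj a b) : edge a b ≤ G := by
  intro x y hxy
  rw [edge_adj] at hxy
  rcases hxy.1 with ⟨rfl, rfl⟩ | ⟨rfl, rfl⟩
  · exact h
  · exact h.symm

lemma tog_of_adj (h : G.Adj a b) : tog a b G = G \ edge a b := by
  rw [tog, symmDiff_def, sup_eq_left.mpr]
  exact le_trans (sdiff_le_sdiff_right (edge_le_of_adj h)) (by simp)

lemma tog_of_not_adj (h : ¬G.Adj a b) : tog a b G = G ⊔ edge a b := by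
  have h1 : Disjoint G (edge a b) := by
    rw [disjoint_iff_inf_le]
    intro x y hxy
    simp only [inf_adj, edge_adj] at hxy
    rcases hxy.2.1 with ⟨rfl, rfl⟩ | ⟨rfl, rfl⟩
    · exact absurd hxy.1 h
    · exact absurd hxy.1.symm h
  rw [tog, symmDiff_def, h1.sdiff_eq_left, h1.symm.sdiff_eq_left]

lemma tog_tog (G : SimpleGraph V) : tog a b (tog a b G) = G := by
  rw [tog, tog, symmDiff_symmDiff_cancel_right]

lemma tog_adj_self (hab : a ≠ b) : (tog a b G).Adj a b ↔ ¬ G.Adj a b := by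
  by_cases h : G.Adj a b
  · rw [tog_of_adj h]
    simp [sdiff_adj, edge_adj, hab, h]
  · rw [tog_of_not_adj h]
    simp [sup_adj, edge_adj, hab, h]

lemma tog_ne (hab : a ≠ b) (G : SimpleGraph V) : tog a b G ≠ G := by
  intro h
  have := tog_adj_self (G := G) hab
  rw [h] at this
  tauto

lemma neg_one_pow_edgeCount_tog (hab : a ≠ b) (G : SimpleGraph V) :
    ((-1 : ℤ)) ^ edgeCount (tog a b G) = -(-1) ^ edgeCount G := by
  by_cases h : G.Adj a b
  · rw [tog_of_adj h, edgeCount_eq_ncard, edgeCount_eq_ncard, edgeSet_sdiff,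
      edge_edgeSet_of_ne hab]
    have hmem : s(a, b) ∈ G.edgeSet := h
    have := Set.ncard_diff_singleton_add_one hmem (Set.toFinite _)
    rw [← this, pow_succ]
    ring
  · rw [tog_of_not_adj h, edgeCount_eq_ncard, edgeCount_eq_ncard, edgeSet_sup,
      edge_edgeSet_of_ne hab, Set.union_singleton]
    have hnm : s(a, b) ∉ G.edgeSet := fun hc => h hc
    rw [Set.ncard_insert_of_notMem hnm (Set.toFinite _), pow_succ]
    ring

lemma reach_of_walk_sup_edge (ha : ¬G.Reachable u a) (hb : ¬G.Reachable u b) :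
    ∀ {x y : V}, (G ⊔ edge a b).Walk x y → G.Reachable u x → G.Reachable u y := by
  intro x y p
  induction p with
  | nil => exact id
  | cons h p ih =>
    intro hx
    rcases (sup_adj _ _ _ _).mp h with h' | h'
    · exact ih (hx.trans h'.reachable)
    · rw [edge_adj] at h'
      rcases h'.1 with ⟨rfl, rfl⟩ | ⟨rfl, rfl⟩
      · exact absurd hx ha
      · exact absurd hx hb

lemma reach_sup_edge (ha : ¬G.Reachable u a) (hb : ¬G.Reachable u b) (z : V) :
    (G ⊔ edge a b).Reachable u z ↔ G.Reachable u z := by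
  constructor
  · rintro ⟨p⟩
    exact reach_of_walk_sup_edge ha hb p (Reachable.refl u)
  · exact fun h => h.mono le_sup_left

lemma reach_tog (hab : a ≠ b) (ha : ¬G.Reachable u a) (hb : ¬G.Reachable u b) (z : V) :
    (tog a b G).Reachable u z ↔ G.Reachable u z := by
  by_cases h : G.Adj a b
  · rw [tog_of_adj h]
    have hG : (G \ edge a b) ⊔ edge a b = G := sdiff_sup_cancel (edge_le_of_adj h)
    have ha' : ¬(G \ edge a b).Reachable u a := fun hr => ha (hr.mono sdiff_le)
    have hb' : ¬(G \ edge a b).Reachable u b := fun hr => hb (hr.mono sdiff_le)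
    conv_rhs => rw [← hG]
    exact (reach_sup_edge ha' hb' z).symm
  · rw [tog_of_not_adj h]
    exact reach_sup_edge ha hb z

/-- the set of vertices reachable from `u`. -/
noncomputable def rset (u : V) (G : SimpleGraph V) : Finset V :=
  Set.toFinset {z | G.Reachable u z}

lemma mem_rset {z : V} : z ∈ rset u G ↔ G.Reachable u z := by
  simp [rset]

lemma rset_tog (hab : a ≠ b) (ha : a ∉ rset u G) (hb : b ∉ rset u G) :
    rset u (tog a b G) = rset u G := by
  rw [mem_rset] at ha hb
  ext z
  rw [mem_rset, mem_rset, reach_tog hab ha hb]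

section Fiber

variable {V : Type} [Fintype V] [DecidableEq V] {u v : V} {G : SimpleGraph V}

lemma rset_compl_eq_singleton_iff :
    (rset u G)ᶜ = {v} ↔ ∀ z, (G.Reachable u z ↔ z ≠ v) := by
  constructor
  · intro h z
    have hz := Finset.ext_iff.mp h z
    simp only [Finset.mem_compl, mem_rset, Finset.mem_singleton] at hz
    constructor
    · intro hr hzv
      exact (hz.mpr hzv) hr
    · intro hzv
      by_contra hr
      exact hzv (hz.mp hr)
  · intro h
    ext z
    simp only [Finset.mem_compl, mem_rset, Finset.mem_singleton, h z, not_not]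

lemma isolated_of_forall (h : ∀ z, G.Reachable u z ↔ z ≠ v) : ∀ x, ¬ G.Adj v x := by
  intro x hx
  have hxv : x ≠ v := fun hh => G.irrefl (hh ▸ hx)
  have h1 : G.Reachable u x := (h x).mpr hxv
  exact ((h v).mp (h1.trans hx.symm.reachable)) rfl

lemma not_reachable_of_isolated (hiso : ∀ x, ¬ G.Adj v x) (hu : u ≠ v) :
    ¬ G.Reachable u v := by
  intro hr
  obtain ⟨p⟩ := hr.symm
  cases p with
  | nil => exact hu rfl
  | cons h _ => exact hiso _ h

lemma reach_comap (hiso : ∀ x, ¬ G.Adj v x) :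
    ∀ {x y : V} (_ : G.Walk x y) (hx : x ≠ v) (hy : y ≠ v),
      (G.comap (Function.Embedding.subtype (· ≠ v))).Reachable ⟨x, hx⟩ ⟨y, hy⟩ := by
  intro x y p
  induction p with
  | nil => exact fun _ _ => Reachable.refl _
  | @cons x c y h p ih =>
    intro hx hy
    have hc : c ≠ v := fun hcv => hiso x (hcv ▸ h).symm
    have hadj : (G.comap (Function.Embedding.subtype (· ≠ v))).Adj ⟨x, hx⟩ ⟨c, hc⟩ := by
      simpa using h
    exact hadj.reachable.trans (ih hc hy)

lemma map_comap_of_isolated (hiso : ∀ x, ¬ G.Adj v x) :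
    (G.comap (Function.Embedding.subtype (· ≠ v))).map (Function.Embedding.subtype (· ≠ v)) = G := by
  ext x y
  simp only [SimpleGraph.map_adj, SimpleGraph.comap_adj, Function.Embedding.coe_subtype]
  constructor
  · rintro ⟨-, a, b, hab, rfl, rfl⟩
    exact hab
  · intro h
    have hx : x ≠ v := fun hh => hiso y (hh ▸ h)
    have hy : y ≠ v := fun hh => hiso x (hh ▸ h).symm
    exact ⟨h.ne, ⟨x, hx⟩, ⟨y, hy⟩, h, rfl, rfl⟩

lemma comap_map_eq' (H : SimpleGraph {x : V // x ≠ v}) :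
    (H.map (Function.Embedding.subtype (· ≠ v))).comap (Function.Embedding.subtype (· ≠ v)) = H := by
  ext a b
  simp only [SimpleGraph.comap_adj, SimpleGraph.map_adj, Function.Embedding.coe_subtype]
  constructor
  · rintro ⟨-, a', b', hab, ha, hb⟩
    rwa [Subtype.ext ha, Subtype.ext hb] at hab
  · intro h
    exact ⟨fun he => h.ne (Subtype.ext he), a, b, h, rfl, rfl⟩

lemma fiber_sum (hu : u ≠ v) :
    ∑ G ∈ Finset.univ.filter (fun G : SimpleGraph V => (rset u G)ᶜ = {v}),
        (-1 : ℤ) ^ edgeCount G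
      = ∑ H ∈ Finset.univ.filter (fun H : SimpleGraph {x : V // x ≠ v} => H.Connected),
        (-1 : ℤ) ^ edgeCount H := by
  refine Finset.sum_nbij' (fun G => G.comap (Function.Embedding.subtype (· ≠ v)))
    (fun H => H.map (Function.Embedding.subtype (· ≠ v))) ?_ ?_ ?_ ?_ ?_
  · -- hi : comap is connected
    intro G hG
    rw [Finset.mem_filter] at hG ⊢
    refine ⟨Finset.mem_univ _, ?_⟩
    have hforall := rset_compl_eq_singleton_iff.mp hG.2
    have hiso := isolated_of_forall hforall
    rw [SimpleGraph.connected_iff_exists_forall_reachable]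
    refine ⟨⟨u, hu⟩, fun w => ?_⟩
    obtain ⟨p⟩ := (hforall ↑w).mpr w.2
    exact reach_comap hiso p hu w.2
  · -- hj : map lands in fiber
    intro H hH
    rw [Finset.mem_filter] at hH ⊢
    refine ⟨Finset.mem_univ _, ?_⟩
    rw [rset_compl_eq_singleton_iff]
    have hiso : ∀ x, ¬ (H.map (Function.Embedding.subtype (· ≠ v))).Adj v x := by
      intro x hx
      rw [SimpleGraph.map_adj] at hx
      obtain ⟨a, b, _, ha, _⟩ := hx
      exact a.2 ha
    intro z
    constructor
    · intro hr hzv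
      exact not_reachable_of_isolated hiso hu (hzv ▸ hr)
    · intro hz
      have hr : H.Reachable ⟨u, hu⟩ ⟨z, hz⟩ := hH.2.preconnected _ _
      exact hr.map (⟨Function.Embedding.subtype (· ≠ v), fun h => by
          rw [SimpleGraph.map_adj]; exact ⟨_, _, h, rfl, rfl⟩⟩ :
        H →g H.map (Function.Embedding.subtype (· ≠ v)))
  · -- left inverse
    intro G hG
    rw [Finset.mem_filter] at hG
    exact map_comap_of_isolated (isolated_of_forall (rset_compl_eq_singleton_iff.mp hG.2))
  · -- right inverse
    intro H _
    exact comap_map_eq' H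
  · -- values agree
    intro G hG
    rw [Finset.mem_filter] at hG
    conv_lhs => rw [← map_comap_of_isolated
      (isolated_of_forall (rset_compl_eq_singleton_iff.mp hG.2))]
    rw [edgeCount_map]

end Fiber

section Main

variable {V : Type} [Fintype V] [DecidableEq V]

noncomputable def pick (V : Type) [Fintype V] [Nonempty V] (T : Finset V) : V × V :=
  if h : ∃ p : V × V, p.1 ∈ T ∧ p.2 ∈ T ∧ p.1 ≠ p.2 then h.choose
  else (Classical.arbitrary V, Classical.arbitrary V)

lemma pick_spec [Nonempty V] {T : Finset V} (h : 1 < T.card) :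
    (pick V T).1 ∈ T ∧ (pick V T).2 ∈ T ∧ (pick V T).1 ≠ (pick V T).2 := by
  obtain ⟨a, ha, b, hb, hab⟩ := Finset.one_lt_card.mp h
  have hex : ∃ p : V × V, p.1 ∈ T ∧ p.2 ∈ T ∧ p.1 ≠ p.2 := ⟨(a, b), ha, hb, hab⟩
  rw [pick, dif_pos hex]
  exact hex.choose_spec

lemma connected_iff_rset (u : V) (G : SimpleGraph V) :
    G.Connected ↔ rset u G = Finset.univ := by
  constructor
  · intro h
    ext z
    simp [mem_rset, h.preconnected u z]
  · intro h
    rw [SimpleGraph.connected_iff_exists_forall_reachable]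
    exact ⟨u, fun z => mem_rset.mp (by rw [h]; exact Finset.mem_univ z)⟩

lemma base_case (h : Fintype.card V = 1) :
    ∑ G ∈ Finset.univ.filter (fun G : SimpleGraph V => G.Connected),
      (-1 : ℤ) ^ edgeCount G = 1 := by
  haveI hsub : Subsingleton V := Fintype.card_le_one_iff_subsingleton.mp h.le
  haveI hne : Nonempty V := Fintype.card_pos_iff.mp (by omega)
  have hbot : ∀ G : SimpleGraph V, G = ⊥ := fun G => by
    ext x y
    simp only [SimpleGraph.bot_adj, iff_false]
    intro hxy
    exact hxy.ne (Subsingleton.elim x y)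
  have hfil : Finset.univ.filter (fun G : SimpleGraph V => G.Connected) = {⊥} := by
    ext G
    rw [Finset.mem_filter, Finset.mem_singleton]
    constructor
    · rintro ⟨_, _⟩; exact hbot G
    · rintro rfl
      refine ⟨Finset.mem_univ _, ?_⟩
      rw [SimpleGraph.connected_iff_exists_forall_reachable]
      exact ⟨Classical.arbitrary V, fun w => by
        rw [Subsingleton.elim (Classical.arbitrary V) w]⟩
  rw [hfil, Finset.sum_singleton, edgeCount_bot, pow_zero]

theorem aux : ∀ (n : ℕ) (V : Type) [Fintype V] [DecidableEq V],
    Fintype.card V = n + 1 →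
    ∑ G ∈ Finset.univ.filter (fun G : SimpleGraph V => G.Connected),
      (-1 : ℤ) ^ edgeCount G = (-1) ^ n * n.factorial := by
  intro n
  induction n with
  | zero =>
    intro V _ _ h
    simpa using base_case h
  | succ n ih =>
    intro V _ _ hcard
    haveI hne : Nonempty V := Fintype.card_pos_iff.mp (by omega)
    obtain ⟨u⟩ := hne
    haveI hne : Nonempty V := ⟨u⟩
    set f : SimpleGraph V → ℤ := fun G => (-1 : ℤ) ^ edgeCount G with hf
    set k : SimpleGraph V → ℕ := fun G => ((rset u G)ᶜ).card with hk
    -- Part A : total sum is zero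
    have hA : ∑ G : SimpleGraph V, f G = 0 := by
      obtain ⟨x, y, hxy⟩ := Fintype.exists_pair_of_one_lt_card
        (by omega : 1 < Fintype.card V)
      refine Finset.sum_ninvolution (tog x y) (fun G => ?_)
        (fun G _ => tog_ne hxy G) (fun G => Finset.mem_univ _) tog_tog
      simp only [hf]
      rw [neg_one_pow_edgeCount_tog hxy]
      ring
    -- Part C : sum over graphs missing ≥ 2 vertices is zero
    have hs2 : ∑ G ∈ Finset.univ.filter (fun G => 2 ≤ k G), f G = 0 := by
      refine Finset.sum_involution
        (fun G _ => tog (pick V ((rset u G)ᶜ)).1 (pick V ((rset u G)ᶜ)).2 G)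
        ?_ ?_ ?_ ?_
      · intro G hG
        have hG2 : 1 < ((rset u G)ᶜ).card := by
          have h9 := (Finset.mem_filter.mp hG).2
          simp only [hk] at h9
          omega
        obtain ⟨_, _, hab⟩ := pick_spec hG2
        simp only [hf]
        rw [neg_one_pow_edgeCount_tog hab]
        ring
      · intro G hG _
        have hG2 : 1 < ((rset u G)ᶜ).card := by
          have h9 := (Finset.mem_filter.mp hG).2
          simp only [hk] at h9
          omega
        obtain ⟨_, _, hab⟩ := pick_spec hG2
        exact tog_ne hab G
      · intro G hG
        have hG2 : 1 < ((rset u G)ᶜ).card := by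
          have h9 := (Finset.mem_filter.mp hG).2
          simp only [hk] at h9
          omega
        obtain ⟨ha, hb, hab⟩ := pick_spec hG2
        have hr : rset u (tog (pick V ((rset u G)ᶜ)).1 (pick V ((rset u G)ᶜ)).2 G)
            = rset u G :=
          rset_tog hab (Finset.mem_compl.mp ha) (Finset.mem_compl.mp hb)
        rw [Finset.mem_filter]
        refine ⟨Finset.mem_univ _, ?_⟩
        simp only [hk, hr]
        exact (Finset.mem_filter.mp hG).2
      · intro G hG
        have hG2 : 1 < ((rset u G)ᶜ).card := by
          have h9 := (Finset.mem_filter.mp hG).2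
          simp only [hk] at h9
          omega
        obtain ⟨ha, hb, hab⟩ := pick_spec hG2
        have hr : rset u (tog (pick V ((rset u G)ᶜ)).1 (pick V ((rset u G)ᶜ)).2 G)
            = rset u G :=
          rset_tog hab (Finset.mem_compl.mp ha) (Finset.mem_compl.mp hb)
        beta_reduce
        rw [hr]
        exact tog_tog G
    -- Part B : sum over graphs missing exactly one vertex
    have hs1 : ∑ G ∈ Finset.univ.filter (fun G => k G = 1), f G
        = (Fintype.card V - 1 : ℕ) * ((-1 : ℤ) ^ n * n.factorial) := by
      have hbi : Finset.univ.filter (fun G => k G = 1)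
          = (Finset.univ.erase u).biUnion
              (fun v => Finset.univ.filter
                (fun G : SimpleGraph V => (rset u G)ᶜ = {v})) := by
        ext G
        simp only [Finset.mem_filter, Finset.mem_biUnion, Finset.mem_erase,
          Finset.mem_univ, true_and, and_true]
        constructor
        · intro h1
          obtain ⟨v, hv⟩ := Finset.card_eq_one.mp h1
          refine ⟨v, fun hvu => ?_, hv⟩
          have hu1 : u ∈ rset u G := mem_rset.mpr (SimpleGraph.Reachable.refl u)
          have hu2 : v ∈ (rset u G)ᶜ := by
            rw [hv]; exact Finset.mem_singleton_self v
          rw [hvu] at hu2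
          exact (Finset.mem_compl.mp hu2) hu1
        · rintro ⟨v, _, hv⟩
          rw [hk]
          simp only
          rw [hv]
          exact Finset.card_singleton v
      rw [hbi, Finset.sum_biUnion ?_]
      · have hconst : ∀ v ∈ Finset.univ.erase u,
            ∑ G ∈ Finset.univ.filter
              (fun G : SimpleGraph V => (rset u G)ᶜ = {v}), f G
            = (-1 : ℤ) ^ n * n.factorial := by
          intro v hv
          have hvu : v ≠ u := (Finset.mem_erase.mp hv).1
          simp only [hf]
          rw [fiber_sum hvu.symm]
          apply ih
          have h1 : Fintype.card {x : V // ¬ x = v} =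
              Fintype.card V - Fintype.card {x : V // x = v} :=
            Fintype.card_subtype_compl _
          have h2 : Fintype.card {x : V // x = v} = 1 := Fintype.card_subtype_eq v
          have h3 : Fintype.card {x : V // x ≠ v} = Fintype.card {x : V // ¬ x = v} := rfl
          omega
        rw [Finset.sum_congr rfl hconst, Finset.sum_const,
          Finset.card_erase_of_mem (Finset.mem_univ u), Finset.card_univ]
        simp
      · intro v hv w hw hvw
        simp only [Finset.disjoint_left, Finset.mem_filter]
        rintro G ⟨_, hGv⟩ ⟨_, hGw⟩
        exact hvw (Finset.singleton_injective (hGv ▸ hGw))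
    -- splitting the total sum
    have hsplit := Finset.sum_filter_add_sum_filter_not Finset.univ
      (fun G => k G = 0) f
    have hsplit2 := Finset.sum_filter_add_sum_filter_not
      (Finset.univ.filter (fun G => ¬ k G = 0)) (fun G => k G = 1) f
    have he1 : (Finset.univ.filter (fun G => ¬ k G = 0)).filter (fun G => k G = 1)
        = Finset.univ.filter (fun G => k G = 1) := by
      rw [Finset.filter_filter]
      apply Finset.filter_congr
      intro G _
      constructor
      · exact fun h => h.2
      · intro h
        exact ⟨by omega, h⟩
    have he2 : (Finset.univ.filter (fun G => ¬ k G = 0)).filter (fun G => ¬ k G = 1)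
        = Finset.univ.filter (fun G => 2 ≤ k G) := by
      rw [Finset.filter_filter]
      apply Finset.filter_congr
      intro G _
      constructor
      · rintro ⟨h1, h2⟩
        omega
      · intro h
        exact ⟨by omega, by omega⟩
    have hs0 : Finset.univ.filter (fun G => k G = 0)
        = Finset.univ.filter (fun G : SimpleGraph V => G.Connected) := by
      apply Finset.filter_congr
      intro G _
      simp only [hk]
      rw [Finset.card_eq_zero, Finset.compl_eq_empty_iff]
      exact (connected_iff_rset u G).symm
    rw [he1, he2] at hsplit2
    rw [hs0] at hsplit
    have hcV : (Fintype.card V - 1 : ℕ) = n + 1 := by omega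
    rw [hcV] at hs1
    have hgoal : ∑ G ∈ Finset.univ.filter (fun G : SimpleGraph V => G.Connected), f G
        = -(((n : ℤ) + 1) * ((-1 : ℤ) ^ n * n.factorial)) := by
      rw [hA] at hsplit
      push_cast at hs1
      linarith
    rw [hgoal, Nat.factorial_succ, pow_succ]
    push_cast
    ring

end Main

end AltSum

/-- For every positive integer `n`, the alternating sum of `(-1)^{e(G)}` over all
connected simple labelled graphs `G` on `n` vertices equals `(-1)^(n-1) * (n-1)!`. -/
theorem alternating_sum_connected_graphs (n : ℕ) (hn : 1 ≤ n) :
    ∑ G ∈ Finset.univ.filter (fun G : SimpleGraph (Fin n) => G.Connected),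
      (-1 : ℤ) ^ edgeCount G = (-1) ^ (n - 1) * (n - 1).factorial := by
  obtain ⟨m, rfl⟩ : ∃ m, n = m + 1 := ⟨n - 1, by omega⟩
  simpa using AltSum.aux m (Fin (m + 1)) (Fintype.card_fin _)
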